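/- For every d ∈ (0,1) and every integer k ≥ 1, the WENO-PM_k mapping function is monotonically non-decreasing on [0,1]: for all 0 ≤ ω₁ ≤ ω₂ ≤ 1, g(ω₁) ≤ g(ω₂). (Indeed its derivative equals ((k+1)(k+2)/d^{k+1})·ω(d−ω)^k ≥ 0 on [0,d] and ((k+1)(k+2)/(1−d)^{k+1})·(ω−d)^k(1−ω) ≥ 0 on [d,1].) -/

import Mathlib

/-- The left branch (ω ≤ d) of the WENO-PMₖ mapping function. -/
noncomputable def gPML (d : ℝ) (k : ℕ) (ω : ℝ) : ℝ :=
  ((-1 : ℝ) ^ k * ((k : ℝ) + 1) / d ^ (k + 1)) * (ω - d) ^ (k + 1) * (ω + d / ((k : ℝ) + 1)) + d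

/-- The right branch (ω > d) of the WENO-PMₖ mapping function. -/
noncomputable def gPMR (d : ℝ) (k : ℕ) (ω : ℝ) : ℝ :=
  (-((k : ℝ) + 1) / (1 - d) ^ (k + 1)) * (ω - d) ^ (k + 1) *
    (ω + (d - ((k : ℝ) + 2)) / ((k : ℝ) + 1)) + d

/-- The WENO-PMₖ mapping function. -/
noncomputable def gPM (d : ℝ) (k : ℕ) (ω : ℝ) : ℝ :=
  if ω ≤ d then gPML d k ω else gPMR d k ω

lemma hasDerivAt_gPML (d : ℝ) (k : ℕ) (ω : ℝ) :
    HasDerivAt (gPML d k)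
      (((-1 : ℝ) ^ k * ((k : ℝ) + 1) / d ^ (k + 1)) * (((k : ℝ) + 2) * ω * (ω - d) ^ k)) ω := by
  have h1 : HasDerivAt (fun x : ℝ => (x - d) ^ (k + 1)) (((k : ℝ) + 1) * (ω - d) ^ k) ω := by
    have := ((hasDerivAt_id ω).sub_const d).fun_pow (k + 1)
    simpa using this
  have h2 : HasDerivAt (fun x : ℝ => x + d / ((k : ℝ) + 1)) 1 ω :=
    (hasDerivAt_id ω).add_const _
  have hk1 : ((k : ℝ) + 1) ≠ 0 := by positivity
  have h3 := ((h1.const_mul ((-1 : ℝ) ^ k * ((k : ℝ) + 1) / d ^ (k + 1))).fun_mul h2).add_const d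
  refine h3.congr_deriv (Eq.symm ?_)
  have e : ((k : ℝ) + 1) * (d / ((k : ℝ) + 1)) = d := by field_simp
  linear_combination (-(((-1 : ℝ) ^ k * ((k : ℝ) + 1) / d ^ (k + 1)) * (ω - d) ^ k)) * e

lemma hasDerivAt_gPMR (d : ℝ) (k : ℕ) (ω : ℝ) :
    HasDerivAt (gPMR d k)
      ((-((k : ℝ) + 1) / (1 - d) ^ (k + 1)) * (((k : ℝ) + 2) * (ω - 1) * (ω - d) ^ k)) ω := by
  have h1 : HasDerivAt (fun x : ℝ => (x - d) ^ (k + 1)) (((k : ℝ) + 1) * (ω - d) ^ k) ω := by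
    have := ((hasDerivAt_id ω).sub_const d).fun_pow (k + 1)
    simpa using this
  have h2 : HasDerivAt (fun x : ℝ => x + (d - ((k : ℝ) + 2)) / ((k : ℝ) + 1)) 1 ω :=
    (hasDerivAt_id ω).add_const _
  have hk1 : ((k : ℝ) + 1) ≠ 0 := by positivity
  have h3 := ((h1.const_mul (-((k : ℝ) + 1) / (1 - d) ^ (k + 1))).fun_mul h2).add_const d
  refine h3.congr_deriv (Eq.symm ?_)
  have e : ((k : ℝ) + 1) * ((d - ((k : ℝ) + 2)) / ((k : ℝ) + 1)) = d - ((k : ℝ) + 2) := by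
    field_simp
  linear_combination (-((-((k : ℝ) + 1) / (1 - d) ^ (k + 1)) * (ω - d) ^ k)) * e

lemma gPML_at_d (d : ℝ) (k : ℕ) : gPML d k d = d := by
  simp [gPML]

lemma gPMR_at_d (d : ℝ) (k : ℕ) : gPMR d k d = d := by
  simp [gPMR]

lemma monoL (d : ℝ) (hd : d ∈ Set.Ioo (0 : ℝ) 1) (k : ℕ) :
    MonotoneOn (gPML d k) (Set.Icc (0 : ℝ) d) := by
  have hdiff : ∀ x : ℝ, DifferentiableAt ℝ (gPML d k) x :=
    fun x => (hasDerivAt_gPML d k x).differentiableAt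
  apply monotoneOn_of_deriv_nonneg (convex_Icc 0 d)
    (Continuous.continuousOn (by unfold gPML; fun_prop : Continuous (gPML d k)))
    (fun x _ => (hdiff x).differentiableWithinAt)
  intro x hx
  rw [interior_Icc] at hx
  rw [(hasDerivAt_gPML d k x).deriv]
  have hx0 : 0 < x := hx.1
  have hxd : x < d := hx.2
  have key : (-1 : ℝ) ^ k * (x - d) ^ k = (d - x) ^ k := by
    rw [← mul_pow]; ring_nf
  have : ((-1 : ℝ) ^ k * ((k : ℝ) + 1) / d ^ (k + 1)) * (((k : ℝ) + 2) * x * (x - d) ^ k)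
      = (((k : ℝ) + 1) * ((k : ℝ) + 2) * x * (d - x) ^ k) / d ^ (k + 1) := by
    rw [← key]; ring
  rw [this]
  have hd0 : (0 : ℝ) < d := hd.1
  have hdx : (0 : ℝ) ≤ d - x := by linarith
  positivity

lemma monoR (d : ℝ) (hd : d ∈ Set.Ioo (0 : ℝ) 1) (k : ℕ) :
    MonotoneOn (gPMR d k) (Set.Icc d 1) := by
  have hdiff : ∀ x : ℝ, DifferentiableAt ℝ (gPMR d k) x :=
    fun x => (hasDerivAt_gPMR d k x).differentiableAt
  apply monotoneOn_of_deriv_nonneg (convex_Icc d 1)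
    (Continuous.continuousOn (by unfold gPMR; fun_prop : Continuous (gPMR d k)))
    (fun x _ => (hdiff x).differentiableWithinAt)
  intro x hx
  rw [interior_Icc] at hx
  rw [(hasDerivAt_gPMR d k x).deriv]
  have hdx : d < x := hx.1
  have hx1 : x < 1 := hx.2
  have : (-((k : ℝ) + 1) / (1 - d) ^ (k + 1)) * (((k : ℝ) + 2) * (x - 1) * (x - d) ^ k)
      = (((k : ℝ) + 1) * ((k : ℝ) + 2) * (1 - x) * (x - d) ^ k) / (1 - d) ^ (k + 1) := by
    ring
  rw [this]
  have h1d : (0 : ℝ) < 1 - d := by linarith [hd.2]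
  have h1x : (0 : ℝ) ≤ 1 - x := by linarith
  have hxd : (0 : ℝ) ≤ x - d := by linarith
  positivity

/-- For every `d ∈ (0,1)` and integer `k ≥ 1`, the WENO-PMₖ mapping function is
monotonically non-decreasing on `[0,1]`: for all `0 ≤ ω₁ ≤ ω₂ ≤ 1`, `g(ω₁) ≤ g(ω₂)`. -/
theorem wenoPM_monotone (d : ℝ) (hd : d ∈ Set.Ioo (0 : ℝ) 1) (k : ℕ) (hk : 1 ≤ k) :
    MonotoneOn (gPM d k) (Set.Icc (0 : ℝ) 1) := by
  intro x hx y hy hxy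
  have hd0 := hd.1
  have hd1 := hd.2
  unfold gPM
  by_cases hxd : x ≤ d
  · by_cases hyd : y ≤ d
    · simp only [hxd, hyd, if_true]
      exact monoL d hd k ⟨hx.1, hxd⟩ ⟨hy.1, hyd⟩ hxy
    · simp only [hxd, hyd, if_true, if_false]
      calc gPML d k x ≤ gPML d k d :=
            monoL d hd k ⟨hx.1, hxd⟩ ⟨le_of_lt hd0, le_refl d⟩ hxd
        _ = d := gPML_at_d d k
        _ = gPMR d k d := (gPMR_at_d d k).symm
        _ ≤ gPMR d k y :=
            monoR d hd k ⟨le_refl d, le_of_lt hd1⟩ ⟨le_of_not_ge hyd, hy.2⟩ (le_of_not_ge hyd)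
  · have hyd : ¬ y ≤ d := fun h => hxd (hxy.trans h)
    simp only [hxd, hyd, if_false]
    exact monoR d hd k ⟨le_of_not_ge hxd, hx.2⟩ ⟨le_of_not_ge hyd, hy.2⟩ hxy
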